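/- Let U ⊆ ℂ be open, f, J : U → ℂ holomorphic with J'' = f · J' on U and J' nowhere vanishing. Let I ⊆ ℝ be an interval and σ : I → U a twice differentiable curve. Then σ satisfies the geodesic equation σ''(t) + f(σ(t))·(σ'(t))² = 0 for all t ∈ I if and only if (J ∘ σ)''(t) = 0 for all t ∈ I. -/

import Mathlib

open Filter Topology

/-- Key pointwise identity: `(J∘σ)''(t) = J'(σ t) * (σ''(t) + f(σ t) σ'(t)²)`. -/
lemma key_identity (U : Set ℂ) (hU : IsOpen U) (f J : ℂ → ℂ)
    (hJ : DifferentiableOn ℂ J U)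
    (hJ'' : ∀ z ∈ U, deriv (deriv J) z = f z * deriv J z)
    (hJ' : ∀ z ∈ U, deriv J z ≠ 0)
    (σ : ℝ → ℂ) (t : ℝ)
    (hz₀ : σ t ∈ U)
    (hσt : DifferentiableAt ℝ σ t)
    (hσ't : DifferentiableAt ℝ (deriv σ) t) :
    deriv (deriv (J ∘ σ)) t
      = deriv J (σ t) * (deriv (deriv σ) t + f (σ t) * (deriv σ t) ^ 2) := by
  set z₀ := σ t with hz₀def
  have hJa : AnalyticOnNhd ℂ J U := hJ.analyticOnNhd hU
  have hne : deriv J z₀ ≠ 0 := hJ' z₀ hz₀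
  have hsJ : HasStrictDerivAt J (deriv J z₀) z₀ := by
    have := (hJa z₀ hz₀).hasStrictFDerivAt
    simpa using this.hasStrictDerivAt
  set e := (hsJ.hasStrictFDerivAt_equiv hne).toOpenPartialHomeomorph J with he
  have hecoe : (e : ℂ → ℂ) = J := rfl
  have hz₀mem : z₀ ∈ e.source :=
    (hsJ.hasStrictFDerivAt_equiv hne).mem_toOpenPartialHomeomorph_source
  -- find a ball around z₀ inside e.source ∩ U
  obtain ⟨r, hr, hball⟩ := Metric.isOpen_iff.1 (e.open_source.inter hU) z₀ ⟨hz₀mem, hz₀⟩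
  -- find a ball around t mapped into it
  have hcont : ContinuousAt σ t := hσt.continuousAt
  obtain ⟨ε, hε, hV⟩ : ∃ ε > 0, ∀ s ∈ Metric.ball t ε, σ s ∈ Metric.ball z₀ r := by
    have : σ ⁻¹' (Metric.ball z₀ r) ∈ 𝓝 t :=
      hcont (Metric.ball_mem_nhds _ hr)
    obtain ⟨ε, hε, hsub⟩ := Metric.mem_nhds_iff.1 this
    exact ⟨ε, hε, fun s hs => hsub hs⟩
  have hVsrc : ∀ s ∈ Metric.ball t ε, σ s ∈ e.source ∧ σ s ∈ U :=
    fun s hs => hball (hV s hs)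
  -- key: on the ball, deriv (J∘σ) = (deriv J ∘ σ) * deriv σ
  have hkey : ∀ s ∈ Metric.ball t ε, deriv (J ∘ σ) s = deriv J (σ s) * deriv σ s := by
    intro s hs
    by_cases hd : DifferentiableAt ℝ σ s
    · have hJd : HasDerivAt J (deriv J (σ s)) (σ s) :=
        ((hJa (σ s) (hVsrc s hs).2).differentiableAt).hasDerivAt
      have := HasDerivAt.scomp (x := s) hJd hd.hasDerivAt
      rw [this.deriv]
      simp [smul_eq_mul, mul_comm]
    · -- σ not differentiable at s ⇒ J∘σ not differentiable at s
      have hnd : ¬ DifferentiableAt ℝ (J ∘ σ) s := by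
        intro hc
        apply hd
        have hmem_s : σ s ∈ e.source := (hVsrc s hs).1
        have hys : J (σ s) ∈ e.target := by
          have := e.map_source hmem_s
          rwa [show e (σ s) = J (σ s) from rfl] at this
        have hsymm_y : e.symm (J (σ s)) = σ s := by
          have := e.left_inv hmem_s
          rwa [show e (σ s) = J (σ s) from rfl] at this
        have hg : ContinuousAt e.symm (J (σ s)) := e.symm.continuousAt hys
        have hfJ : HasDerivAt J (deriv J (σ s)) (e.symm (J (σ s))) := by
          rw [hsymm_y]
          exact ((hJa (σ s) (hVsrc s hs).2).differentiableAt).hasDerivAt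
        have hfg : ∀ᶠ y' in 𝓝 (J (σ s)), J (e.symm y') = y' := by
          filter_upwards [e.open_target.mem_nhds hys] with y' hy'
          have := e.right_inv hy'
          rwa [show e (e.symm y') = J (e.symm y') from rfl] at this
        have hinv : HasDerivAt e.symm (deriv J (σ s))⁻¹ (J (σ s)) :=
          HasDerivAt.of_local_left_inverse hg hfJ (hJ' _ (hVsrc s hs).2) hfg
        have hcomp : DifferentiableAt ℝ (e.symm ∘ (J ∘ σ)) s :=
          (hinv.differentiableAt.restrictScalars ℝ).comp s hc
        have heq : σ =ᶠ[𝓝 s] e.symm ∘ (J ∘ σ) := by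
          filter_upwards [Metric.isOpen_ball.mem_nhds hs] with s' hs'
          have hmem : σ s' ∈ e.source := (hVsrc s' hs').1
          have := e.left_inv hmem
          rw [show e (σ s') = J (σ s') from rfl] at this
          exact this.symm
        exact hcomp.congr_of_eventuallyEq heq
      rw [deriv_zero_of_not_differentiableAt hnd,
        deriv_zero_of_not_differentiableAt hd, mul_zero]
  -- so deriv (J∘σ) =ᶠ[𝓝 t] (deriv J ∘ σ) * deriv σ
  have hev : deriv (J ∘ σ) =ᶠ[𝓝 t] fun s => deriv J (σ s) * deriv σ s := by
    filter_upwards [Metric.ball_mem_nhds t hε] with s hs using hkey s hs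
  rw [hev.deriv_eq]
  -- compute the derivative of the product
  have hJ'a : AnalyticOnNhd ℂ (deriv J) U := hJa.deriv
  have h1 : HasDerivAt (fun s => deriv J (σ s)) (deriv σ t • deriv (deriv J) z₀) t :=
    HasDerivAt.scomp (x := t) ((hJ'a z₀ hz₀).differentiableAt).hasDerivAt hσt.hasDerivAt
  have h2 : HasDerivAt (deriv σ) (deriv (deriv σ) t) t := hσ't.hasDerivAt
  have h3 : deriv (fun s => deriv J (σ s) * deriv σ s) t
      = deriv σ t • deriv (deriv J) z₀ * deriv σ t + deriv J (σ t) * deriv (deriv σ) t :=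
    (h1.mul h2).deriv
  rw [h3, hJ'' z₀ hz₀]
  simp only [smul_eq_mul]
  ring

/-- In a ∇-chart obtained from `J` with `J'' = f·J'` and `J'` nonvanishing, a twice
differentiable curve `σ` satisfies the geodesic equation `σ'' + (f∘σ)·(σ')² = 0`
iff `(J ∘ σ)'' ≡ 0`. -/
theorem stmt1 (U : Set ℂ) (hU : IsOpen U) (f J : ℂ → ℂ)
    (hf : DifferentiableOn ℂ f U) (hJ : DifferentiableOn ℂ J U)
    (hJ'' : ∀ z ∈ U, deriv (deriv J) z = f z * deriv J z)
    (hJ' : ∀ z ∈ U, deriv J z ≠ 0)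
    (I : Set ℝ) (hI : I.OrdConnected) (σ : ℝ → ℂ)
    (hσU : ∀ t ∈ I, σ t ∈ U)
    (hσ : ∀ t ∈ I, DifferentiableAt ℝ σ t)
    (hσ' : ∀ t ∈ I, DifferentiableAt ℝ (deriv σ) t) :
    (∀ t ∈ I, deriv (deriv σ) t + f (σ t) * (deriv σ t) ^ 2 = 0) ↔
      (∀ t ∈ I, deriv (deriv (J ∘ σ)) t = 0) := by
  constructor
  · intro H t ht
    rw [key_identity U hU f J hJ hJ'' hJ' σ t (hσU t ht) (hσ t ht) (hσ' t ht),
      H t ht, mul_zero]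
  · intro H t ht
    have := H t ht
    rw [key_identity U hU f J hJ hJ'' hJ' σ t (hσU t ht) (hσ t ht) (hσ' t ht)] at this
    rcases mul_eq_zero.1 this with h | h
    · exact absurd h (hJ' _ (hσU t ht))
    · exact h
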